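/- Let (R, M) be a local sQQR-domain with R ⊊ Ω(M). Then Ω(M) is itself an sQQR-domain. -/

import Mathlib

noncomputable section

/-- The image of `A` in `L` under the algebra map, as a set. -/
def imageR (A L : Type*) [CommRing A] [CommRing L] [Algebra A L] : Set L :=
  Set.range (algebraMap A L)

/-- The Kaplansky transform of an ideal `I` of `A`, computed inside `L`. -/
def omegaSet (A L : Type*) [CommRing A] [CommRing L] [Algebra A L] (I : Ideal A) : Set L :=
  {x : L | ∀ a ∈ I, ∃ n : ℕ, 1 ≤ n ∧ ∃ r : A, (algebraMap A L a) ^ n * x = algebraMap A L r}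

/-- The localization of `A` at the prime `P`, viewed as a subset of `L`. -/
def locSet (A L : Type*) [CommRing A] [CommRing L] [Algebra A L] (P : Ideal A) : Set L :=
  {x : L | ∃ s : A, s ∉ P ∧ ∃ r : A, x * algebraMap A L s = algebraMap A L r}

/-- The conductor ideal `(A :_A U) = {r : A | r • U ⊆ A}`. -/
def condIdeal (A L : Type*) [CommRing A] [CommRing L] [Algebra A L] (U : Set L) : Ideal A where
  carrier := {r : A | ∀ u ∈ U, ∃ r' : A, algebraMap A L r * u = algebraMap A L r'}
  zero_mem' := fun u _ => ⟨0, by simp⟩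
  add_mem' := by
    rintro a b ha hb u hu
    obtain ⟨a', ha'⟩ := ha u hu
    obtain ⟨b', hb'⟩ := hb u hu
    exact ⟨a' + b', by rw [map_add, map_add, add_mul, ha', hb']⟩
  smul_mem' := by
    rintro c r h u hu
    obtain ⟨r', hr'⟩ := h u hu
    exact ⟨c * r', by rw [smul_eq_mul, map_mul, map_mul, mul_assoc, hr']⟩

/-- A domain is an sQQR-domain if every simple overring `R[u]`, `u` in the quotient field,
is an intersection of localizations of `R` at primes. -/
def IsSQQR (A : Type*) [CommRing A] [IsDomain A] : Prop :=
  ∀ u : FractionRing A, ∃ Ps : Set (Ideal A), (∀ P ∈ Ps, P.IsPrime) ∧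
    (↑(Algebra.adjoin A {u} : Subalgebra A (FractionRing A)) : Set (FractionRing A)) =
      ⋂ P ∈ Ps, locSet A (FractionRing A) P

/-- A Prüfer domain: every localization at a prime is a valuation domain. -/
def IsPrufer (A : Type*) [CommRing A] [IsDomain A] : Prop :=
  ∀ (P : Ideal A) (hP : P.IsPrime),
    haveI := hP
    letI : IsDomain (Localization.AtPrime P) := IsLocalization.isDomain_of_local_atPrime hP
    ValuationRing (Localization.AtPrime P)


/-- The Kaplansky transform as a subring of `L`. -/
def omegaSubring (A L : Type*) [CommRing A] [Field L] [Algebra A L] (I : Ideal A) : Subring L where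
  carrier := omegaSet A L I
  zero_mem' := fun a _ => ⟨1, le_refl 1, 0, by simp⟩
  one_mem' := fun a _ => ⟨1, le_refl 1, a, by simp⟩
  add_mem' := by
    rintro x y hx hy a ha
    obtain ⟨n, hn, r, hr⟩ := hx a ha
    obtain ⟨m, hm, s, hs⟩ := hy a ha
    refine ⟨n + m, le_trans hn (Nat.le_add_right _ _), a ^ m * r + a ^ n * s, ?_⟩
    have h : (algebraMap A L a) ^ (n + m) * (x + y) =
        (algebraMap A L a) ^ m * ((algebraMap A L a) ^ n * x) +
          (algebraMap A L a) ^ n * ((algebraMap A L a) ^ m * y) := by ring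
    rw [h, hr, hs, map_add, map_mul, map_mul, map_pow, map_pow]
  neg_mem' := by
    rintro x hx a ha
    obtain ⟨n, hn, r, hr⟩ := hx a ha
    exact ⟨n, hn, -r, by rw [map_neg, mul_neg, hr]⟩
  mul_mem' := by
    rintro x y hx hy a ha
    obtain ⟨n, hn, r, hr⟩ := hx a ha
    obtain ⟨m, hm, s, hs⟩ := hy a ha
    refine ⟨n + m, le_trans hn (Nat.le_add_right _ _), r * s, ?_⟩
    have h : (algebraMap A L a) ^ (n + m) * (x * y) =
        ((algebraMap A L a) ^ n * x) * ((algebraMap A L a) ^ m * y) := by ring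
    rw [h, hr, hs, map_mul]

section Aux

variable (R : Type*) [CommRing R] [IsDomain R]

/-- The image of `R` sits inside any Kaplansky transform. -/
lemma imageR_subset_omegaSet (I : Ideal R) :
    imageR R (FractionRing R) ⊆ omegaSet R (FractionRing R) I := by
  rintro x ⟨r, rfl⟩ a ha
  exact ⟨1, le_refl 1, a * r, by rw [pow_one, ← map_mul]⟩

variable [IsLocalRing R]

/-- The localization at the maximal ideal of a local ring is `R` itself. -/
lemma locSet_maximal_subset :
    locSet R (FractionRing R) (IsLocalRing.maximalIdeal R) ⊆ imageR R (FractionRing R) := by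
  rintro x ⟨s, hs, r, heq⟩
  have hsu : IsUnit s := by
    by_contra h
    exact hs ((IsLocalRing.mem_maximalIdeal s).2 h)
  obtain ⟨v, rfl⟩ := hsu
  refine ⟨r * ↑v⁻¹, ?_⟩
  have hv : algebraMap R (FractionRing R) ↑v ≠ 0 := by
    intro h
    have : (↑v : R) = 0 := IsFractionRing.injective R (FractionRing R) (by simpa using h)
    exact v.ne_zero this
  apply mul_right_cancel₀ hv
  rw [heq, ← map_mul, mul_assoc, Units.inv_mul, mul_one]

/-- The Kaplansky transform of `M` is contained in every localization at a prime `P ≠ M`. -/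
lemma omegaSet_subset_locSet (P : Ideal R) (hP : P.IsPrime)
    (hPM : P ≠ IsLocalRing.maximalIdeal R) :
    omegaSet R (FractionRing R) (IsLocalRing.maximalIdeal R) ⊆ locSet R (FractionRing R) P := by
  have hle : P ≤ IsLocalRing.maximalIdeal R := IsLocalRing.le_maximalIdeal hP.ne_top
  have hex : ∃ a, a ∈ IsLocalRing.maximalIdeal R ∧ a ∉ P := by
    by_contra h
    push_neg at h
    exact hPM (le_antisymm hle h)
  obtain ⟨a, haM, haP⟩ := hex
  intro x hx
  obtain ⟨n, _, r, hr⟩ := hx a haM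
  refine ⟨a ^ n, fun h => haP (hP.mem_of_pow_mem n h), r, ?_⟩
  rw [map_pow, mul_comm]
  exact hr

/-- The prime of `Ω(M)` lying over a prime `P ≠ M` of `R`. -/
def transIdeal (P : Ideal R) (hP : P.IsPrime)
    (hTP : omegaSet R (FractionRing R) (IsLocalRing.maximalIdeal R) ⊆
      locSet R (FractionRing R) P) :
    Ideal ↥(omegaSubring R (FractionRing R) (IsLocalRing.maximalIdeal R)) where
  carrier := {t | ∃ s : R, s ∉ P ∧ ∃ r ∈ P,
    (t : FractionRing R) * algebraMap R (FractionRing R) s = algebraMap R (FractionRing R) r}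
  zero_mem' := ⟨1, hP.ne_top ∘ (Ideal.eq_top_iff_one P).2, 0, P.zero_mem, by simp⟩
  add_mem' := by
    rintro a b ⟨s1, hs1, r1, hr1, heq1⟩ ⟨s2, hs2, r2, hr2, heq2⟩
    refine ⟨s1 * s2, fun h => ((hP.mem_or_mem h).elim hs1 hs2), r1 * s2 + r2 * s1,
      P.add_mem (P.mul_mem_right _ hr1) (P.mul_mem_right _ hr2), ?_⟩
    have hab : ((a + b : ↥(omegaSubring R (FractionRing R) (IsLocalRing.maximalIdeal R)))
        : FractionRing R) = (a : FractionRing R) + (b : FractionRing R) := rfl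
    rw [hab, map_mul, map_add, map_mul, map_mul]
    linear_combination (algebraMap R (FractionRing R) s2) * heq1 +
      (algebraMap R (FractionRing R) s1) * heq2
  smul_mem' := by
    rintro c t ⟨s, hs, r, hr, heq⟩
    obtain ⟨s', hs', r', heq'⟩ := hTP c.2
    refine ⟨s * s', fun h => ((hP.mem_or_mem h).elim hs hs'), r * r',
      P.mul_mem_right _ hr, ?_⟩
    rw [smul_eq_mul, MulMemClass.coe_mul, map_mul, map_mul]
    linear_combination ((c : FractionRing R) * algebraMap R (FractionRing R) s') * heq +
      algebraMap R (FractionRing R) r * heq'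

lemma transIdeal_isPrime (P : Ideal R) (hP : P.IsPrime)
    (hTP : omegaSet R (FractionRing R) (IsLocalRing.maximalIdeal R) ⊆
      locSet R (FractionRing R) P) : (transIdeal R P hP hTP).IsPrime := by
  have inj := IsFractionRing.injective R (FractionRing R)
  constructor
  · intro h
    rw [Ideal.eq_top_iff_one] at h
    obtain ⟨s, hs, r, hr, heq⟩ := h
    have : (1 : FractionRing R) * algebraMap R (FractionRing R) s
        = algebraMap R (FractionRing R) r := heq
    rw [one_mul] at this
    exact hs (inj this ▸ hr)
  · rintro t1 t2 ⟨s, hs, r, hr, heq⟩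
    obtain ⟨s1, hs1, r1, heq1⟩ := hTP t1.2
    obtain ⟨s2, hs2, r2, heq2⟩ := hTP t2.2
    have hmul : ((t1 * t2 : _) : FractionRing R)
        = (t1 : FractionRing R) * (t2 : FractionRing R) := rfl
    rw [hmul] at heq
    have key : algebraMap R (FractionRing R) (r1 * r2 * s)
        = algebraMap R (FractionRing R) (r * (s1 * s2)) := by
      rw [map_mul, map_mul, map_mul, map_mul]
      linear_combination (-(algebraMap R (FractionRing R) r2 * algebraMap R (FractionRing R) s)) * heq1 -
        ((t1 : FractionRing R) * algebraMap R (FractionRing R) s1 * algebraMap R (FractionRing R) s) * heq2 +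
        (algebraMap R (FractionRing R) s1 * algebraMap R (FractionRing R) s2) * heq
    have key' : r1 * r2 * s ∈ P := inj key ▸ P.mul_mem_right _ hr
    have h12 : r1 * r2 ∈ P := ((hP.mem_or_mem key').elim id (fun h => absurd h hs))
    rcases hP.mem_or_mem h12 with h | h
    · exact Or.inl ⟨s1, hs1, r1, h, heq1⟩
    · exact Or.inr ⟨s2, hs2, r2, h, heq2⟩

lemma locSet_transIdeal (P : Ideal R) (hP : P.IsPrime)
    (hTP : omegaSet R (FractionRing R) (IsLocalRing.maximalIdeal R) ⊆
      locSet R (FractionRing R) P) :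
    locSet ↥(omegaSubring R (FractionRing R) (IsLocalRing.maximalIdeal R)) (FractionRing R)
        (transIdeal R P hP hTP) = locSet R (FractionRing R) P := by
  have inj := IsFractionRing.injective R (FractionRing R)
  ext x
  constructor
  · rintro ⟨σ, hσ, τ, heq⟩
    obtain ⟨s1, hs1, r1, heq1⟩ := hTP σ.2
    obtain ⟨s2, hs2, r2, heq2⟩ := hTP τ.2
    have hr1 : r1 ∉ P := fun h => hσ ⟨s1, hs1, r1, h, heq1⟩
    have heq' : x * (σ : FractionRing R) = (τ : FractionRing R) := heq
    refine ⟨r1 * s2, fun h => ((hP.mem_or_mem h).elim hr1 hs2), r2 * s1, ?_⟩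
    rw [map_mul, map_mul]
    linear_combination (-(algebraMap R (FractionRing R) s2 * x)) * heq1 +
      algebraMap R (FractionRing R) s1 * heq2 +
      (algebraMap R (FractionRing R) s1 * algebraMap R (FractionRing R) s2) * heq'
  · rintro ⟨s, hs, r, heq⟩
    refine ⟨⟨algebraMap R (FractionRing R) s,
        imageR_subset_omegaSet R (IsLocalRing.maximalIdeal R) ⟨s, rfl⟩⟩, ?_,
      ⟨algebraMap R (FractionRing R) r,
        imageR_subset_omegaSet R (IsLocalRing.maximalIdeal R) ⟨r, rfl⟩⟩, heq⟩
    rintro ⟨s', hs', r', hr', heq'⟩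
    have : algebraMap R (FractionRing R) (s * s') = algebraMap R (FractionRing R) r' := by
      rw [map_mul]; exact heq'
    have hss' : s * s' ∈ P := inj this ▸ hr'
    exact ((hP.mem_or_mem hss').elim hs hs')

/-- Any domain is the intersection of its localizations at all maximal ideals. -/
lemma range_eq_iInter_locSet (A L : Type*) [CommRing A] [Nontrivial A] [CommRing L]
    [Algebra A L] :
    Set.range (algebraMap A L) = ⋂ Q ∈ {Q : Ideal A | Q.IsMaximal}, locSet A L Q := by
  ext x
  simp only [Set.mem_iInter, Set.mem_setOf_eq]
  constructor
  · rintro ⟨a, rfl⟩ Q hQ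
    exact ⟨1, fun h => hQ.ne_top ((Ideal.eq_top_iff_one Q).2 h), a, by simp⟩
  · intro hx
    have h1 : (1 : A) ∈ condIdeal A L {x} := by
      by_contra h
      have hne : condIdeal A L {x} ≠ ⊤ := fun ht => h (ht ▸ Submodule.mem_top)
      obtain ⟨Q, hQ, hle⟩ := Ideal.exists_le_maximal _ hne
      obtain ⟨s, hs, r, heq⟩ := hx Q hQ
      refine hs (hle ?_)
      rintro u hu
      rw [Set.mem_singleton_iff] at hu
      subst hu
      exact ⟨r, by rw [mul_comm]; exact heq⟩
    obtain ⟨r', hr'⟩ := h1 x rfl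
    exact ⟨r', by rw [map_one, one_mul] at hr'; exact hr'.symm⟩

end Aux

set_option maxHeartbeats 1000000 in
set_option synthInstance.maxHeartbeats 400000 in
theorem stmt12 (R : Type*) [CommRing R] [IsDomain R] [IsLocalRing R] (h1 : IsSQQR R)
    (h2 : imageR R (FractionRing R) ⊂
      omegaSet R (FractionRing R) (IsLocalRing.maximalIdeal R)) :
    IsSQQR ↥(omegaSubring R (FractionRing R) (IsLocalRing.maximalIdeal R)) := by
  classical
  set F := FractionRing R with hF
  set T := omegaSubring R F (IsLocalRing.maximalIdeal R) with hT
  have hTSet : (T : Set F) = omegaSet R F (IsLocalRing.maximalIdeal R) := rfl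
  have hRange : Set.range (algebraMap ↥T F) = (T : Set F) := Subtype.range_coe
  have hRT : imageR R F ⊆ (T : Set F) :=
    imageR_subset_omegaSet R (IsLocalRing.maximalIdeal R)
  haveI : IsFractionRing ↥T F := by
    constructor
    constructor
    · rintro ⟨s, hsm⟩
      have hs0 : s ≠ 0 := nonZeroDivisors.ne_zero hsm
      have : (s : F) ≠ 0 := fun h => hs0 (Subtype.ext h)
      exact isUnit_iff_ne_zero.2 this
    · intro z
      obtain ⟨r, s, hs, heq⟩ := IsFractionRing.div_surjective (A := R) z
      have hs0 : algebraMap R F s ≠ 0 := fun h =>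
        nonZeroDivisors.ne_zero hs (IsFractionRing.injective R F (by simpa using h))
      refine ⟨⟨⟨algebraMap R F r, hRT ⟨r, rfl⟩⟩,
        ⟨⟨algebraMap R F s, hRT ⟨s, rfl⟩⟩, mem_nonZeroDivisors_of_ne_zero
          (fun h => hs0 (congrArg Subtype.val h))⟩⟩, ?_⟩
      show z * algebraMap R F s = algebraMap R F r
      rw [← heq, div_mul_cancel₀ _ hs0]
    · intro x y h
      exact ⟨1, by rw [Subtype.ext (h : (x : F) = (y : F))]⟩
  intro u'
  set e : FractionRing ↥T ≃ₐ[↥T] F := FractionRing.algEquiv ↥T F with he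
  set u : F := e u' with hu_def
  -- Step 1: the statement at the level of F.
  obtain ⟨Qs, hQsPrime, hKeq⟩ : ∃ Qs : Set (Ideal ↥T), (∀ Q ∈ Qs, Q.IsPrime) ∧
      (↑(Algebra.adjoin ↥T ({u} : Set F)) : Set F) = ⋂ Q ∈ Qs, locSet ↥T F Q := by
    by_cases hu : u ∈ (T : Set F)
    · refine ⟨{Q | Q.IsMaximal}, fun Q hQ => hQ.isPrime, ?_⟩
      have hadj : Algebra.adjoin ↥T ({u} : Set F) = ⊥ := by
        refine le_antisymm (Algebra.adjoin_le_iff.2 ?_) bot_le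
        rintro x hx
        rw [Set.mem_singleton_iff] at hx
        subst hx
        rw [Algebra.coe_bot]
        exact ⟨⟨u, hu⟩, rfl⟩
      rw [hadj, Algebra.coe_bot, range_eq_iInter_locSet]
    · -- u ∉ T
      have huR : u ∉ imageR R F := fun h => hu (hRT h)
      obtain ⟨Ps, hPsPrime, hPeq⟩ := h1 u
      have huAdj : u ∈ (↑(Algebra.adjoin R ({u} : Set F)) : Set F) :=
        Algebra.subset_adjoin rfl
      have hPM : ∀ P ∈ Ps, P ≠ IsLocalRing.maximalIdeal R := by
        intro P hPm hMeq
        subst hMeq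
        have : u ∈ ⋂ P ∈ Ps, locSet R F P := hPeq ▸ huAdj
        rw [Set.mem_iInter₂] at this
        exact huR (locSet_maximal_subset R (this _ hPm))
      have hTP : ∀ P ∈ Ps, (T : Set F) ⊆ locSet R F P := fun P hPm =>
        omegaSet_subset_locSet R P (hPsPrime P hPm) (hPM P hPm)
      have hTadj : (T : Set F) ⊆ (↑(Algebra.adjoin R ({u} : Set F)) : Set F) := by
        rw [hPeq]
        exact Set.subset_iInter₂ fun P hPm => hTP P hPm
      -- T[u] = R[u]
      have hadj2 : (↑(Algebra.adjoin ↥T ({u} : Set F)) : Set F)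
          = (↑(Algebra.adjoin R ({u} : Set F)) : Set F) := by
        have key : (Algebra.adjoin ↥T ({u} : Set F)).toSubring
            = (Algebra.adjoin R ({u} : Set F)).toSubring := by
          apply le_antisymm
          · rw [Algebra.adjoin_eq_ring_closure ({u} : Set F)]
            apply Subring.closure_le.2
            rintro x (hx | hx)
            · rw [hRange] at hx
              exact hTadj hx
            · rw [Set.mem_singleton_iff] at hx
              subst hx
              exact huAdj
          · rw [Algebra.adjoin_eq_ring_closure ({u} : Set F)]
            apply Subring.closure_le.2
            rintro x (hx | hx)
            · have hxT : x ∈ (T : Set F) := hRT hx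
              have : x = algebraMap ↥T F ⟨x, hxT⟩ := rfl
              rw [this]
              exact Subalgebra.algebraMap_mem _ _
            · rw [Set.mem_singleton_iff] at hx
              subst hx
              exact Algebra.subset_adjoin rfl
        rw [← Subalgebra.coe_toSubring, ← Subalgebra.coe_toSubring, key]
      refine ⟨{Q | ∃ P, ∃ hPm : P ∈ Ps, Q = transIdeal R P (hPsPrime P hPm) (hTP P hPm)},
        ?_, ?_⟩
      · rintro Q ⟨P, hPm, rfl⟩
        exact transIdeal_isPrime R P _ _
      · rw [hadj2, hPeq]
        ext x
        simp only [Set.mem_iInter₂, Set.mem_setOf_eq]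
        constructor
        · rintro hx Q ⟨P, hPm, rfl⟩
          exact (Set.ext_iff.1 (locSet_transIdeal R P (hPsPrime P hPm) (hTP P hPm)) x).2 (hx P hPm)
        · intro hx P hPm
          have := hx _ ⟨P, hPm, rfl⟩
          exact (Set.ext_iff.1 (locSet_transIdeal R P (hPsPrime P hPm) (hTP P hPm)) x).1 this
  -- Step 2: transport along e.
  refine ⟨Qs, hQsPrime, ?_⟩
  have hadj_iff : ∀ x : FractionRing ↥T,
      x ∈ Algebra.adjoin ↥T ({u'} : Set (FractionRing ↥T)) ↔
        e x ∈ Algebra.adjoin ↥T ({u} : Set F) := by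
    intro x
    have hmap : Subalgebra.map e.toAlgHom (Algebra.adjoin ↥T ({u'} : Set (FractionRing ↥T)))
        = Algebra.adjoin ↥T ({u} : Set F) := by
      rw [AlgHom.map_adjoin]
      congr 1
      simp [hu_def]
    constructor
    · intro hx
      rw [← hmap]
      exact Subalgebra.mem_map.2 ⟨x, hx, rfl⟩
    · intro hx
      rw [← hmap] at hx
      obtain ⟨y, hy, hyx⟩ := Subalgebra.mem_map.1 hx
      have : y = x := e.injective hyx
      rwa [← this]
  have hloc_iff : ∀ (Q : Ideal ↥T) (x : FractionRing ↥T),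
      x ∈ locSet ↥T (FractionRing ↥T) Q ↔ e x ∈ locSet ↥T F Q := by
    intro Q x
    constructor
    · rintro ⟨s, hs, r, heq⟩
      refine ⟨s, hs, r, ?_⟩
      have := congrArg e heq
      rwa [map_mul, AlgEquiv.commutes, AlgEquiv.commutes] at this
    · rintro ⟨s, hs, r, heq⟩
      refine ⟨s, hs, r, ?_⟩
      have := congrArg e.symm heq
      rwa [map_mul, AlgEquiv.symm_apply_apply, AlgEquiv.commutes, AlgEquiv.commutes] at this
  ext x
  have hKx : e x ∈ (↑(Algebra.adjoin ↥T ({u} : Set F)) : Set F) ↔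
      ∀ Q ∈ Qs, e x ∈ locSet ↥T F Q := by
    rw [hKeq, Set.mem_iInter₂]
  simp only [SetLike.mem_coe, Set.mem_iInter₂]
  rw [hadj_iff x]
  rw [show (e x ∈ Algebra.adjoin ↥T ({u} : Set F)) ↔
      (e x ∈ (↑(Algebra.adjoin ↥T ({u} : Set F)) : Set F)) from Iff.rfl, hKx]
  constructor
  · intro h Q hQ
    exact (hloc_iff Q x).2 (h Q hQ)
  · intro h Q hQ
    exact (hloc_iff Q x).1 (h Q hQ)

end
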